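/- Under the feasibility assumptions of QRAP-NC, for each $j$ and $C \in [L_j, U_j]$, the optimal solution of QRAP$^j(C)$ — the problem obtained from QRAP-NC$^j(C)$ by replacing the nested constraints $L_k \le \sum_{i \le k} x_i \le U_k$ ($k < j$) with single-variable bounds $x^{j-1}_i(L_{j-1}) \le x_i \le x^{j-1}_i(U_{j-1})$ for $i < j$ — coincides with the optimal solution of QRAP-NC$^j(C)$. -/

import Mathlib

def qrapncFeas (n : ℕ) (l u L U : Fin n → ℝ) (C : ℝ) (x : Fin n → ℝ) : Prop :=
  (∑ i, x i = C) ∧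
  (∀ k : Fin n, (k : ℕ) + 1 < n →
    L k ≤ ∑ i ∈ Finset.Iic k, x i ∧ ∑ i ∈ Finset.Iic k, x i ≤ U k) ∧
  (∀ i, l i ≤ x i ∧ x i ≤ u i)

noncomputable def qrapObj (n : ℕ) (a x : Fin n → ℝ) : ℝ := ∑ i, (1/2) * (x i)^2 / a i

def qrapncOpt (n : ℕ) (a l u L U : Fin n → ℝ) (C : ℝ) (x : Fin n → ℝ) : Prop :=
  qrapncFeas n l u L U C x ∧
  ∀ y, qrapncFeas n l u L U C y → qrapObj n a x ≤ qrapObj n a y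



lemma Iic_castSucc_eq (n : ℕ) (k : Fin n) :
    Finset.Iic (k.castSucc) = (Finset.Iic k).map ⟨Fin.castSucc, Fin.castSucc_injective n⟩ := by
  ext i
  simp only [Finset.mem_Iic, Finset.mem_map, Function.Embedding.coeFn_mk]
  constructor
  · intro h
    have h1 : (i : ℕ) ≤ (k : ℕ) := h
    have hi : (i : ℕ) < n := by omega
    exact ⟨⟨i, hi⟩, h1, rfl⟩
  · rintro ⟨j, hj, rfl⟩
    exact Fin.castSucc_le_castSucc_iff.mpr hj

lemma sum_Iic_castSucc (n : ℕ) (f : Fin (n+1) → ℝ) (k : Fin n) :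
    ∑ i ∈ Finset.Iic (k.castSucc), f i = ∑ i ∈ Finset.Iic k, f i.castSucc := by
  rw [Iic_castSucc_eq, Finset.sum_map]
  rfl

lemma Iic_last_eq (n : ℕ) : Finset.Iic (Fin.last n) = Finset.univ := by
  ext i; simp [Fin.le_last]

lemma sum_Iic_top (n : ℕ) (f : Fin (n+2) → ℝ) :
    ∑ i ∈ Finset.Iic ((Fin.last n).castSucc), f i = ∑ i : Fin (n+1), f i.castSucc := by
  rw [sum_Iic_castSucc]
  congr 1
  ext i; simp [Fin.le_last]

lemma qrapObj_split (n : ℕ) (a x : Fin (n+1) → ℝ) :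
    qrapObj (n+1) a x
      = qrapObj n (a ∘ Fin.castSucc) (x ∘ Fin.castSucc)
        + (1/2) * (x (Fin.last n))^2 / a (Fin.last n) := by
  simp [qrapObj, Fin.sum_univ_castSucc, Function.comp]
lemma combo_feas (n : ℕ) (l u L U : Fin (n+2) → ℝ) (B1 B2 : ℝ) (x y : Fin (n+2) → ℝ)
    (hx : qrapncFeas (n+2) l u L U B1 x) (hy : qrapncFeas (n+2) l u L U B2 y)
    (θ c : ℝ) (hθ0 : 0 ≤ θ) (hθ1 : θ ≤ 1)
    (hcl : l (Fin.last (n+1)) ≤ c) (hcu : c ≤ u (Fin.last (n+1))) :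
    qrapncFeas (n+2) l u L U
      ((1-θ) * (∑ i : Fin (n+1), x i.castSucc) + θ * (∑ i : Fin (n+1), y i.castSucc) + c)
      (fun i => if i = Fin.last (n+1) then c else (1-θ) * x i + θ * y i) := by
  refine ⟨?_, ?_, ?_⟩
  · rw [Fin.sum_univ_castSucc]
    simp only [if_pos rfl]
    have hne : ∀ i : Fin (n+1), i.castSucc ≠ Fin.last (n+1) :=
      fun i => (Fin.castSucc_lt_last i).ne
    have : ∀ i : Fin (n+1),
        (if i.castSucc = Fin.last (n+1) then c else (1-θ) * x i.castSucc + θ * y i.castSucc)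
          = (1-θ) * x i.castSucc + θ * y i.castSucc := fun i => if_neg (hne i)
    rw [Finset.sum_congr rfl (fun i _ => this i), Finset.sum_add_distrib,
      ← Finset.mul_sum, ← Finset.mul_sum]
    simp
  · intro k hk
    have hne : ∀ i ∈ Finset.Iic k,
        (if i = Fin.last (n+1) then c else (1-θ) * x i + θ * y i)
          = (1-θ) * x i + θ * y i := by
      intro i hi
      refine if_neg fun e => ?_
      have h1 : (i : ℕ) ≤ (k : ℕ) := Fin.le_def.mp (Finset.mem_Iic.mp hi)
      have h2 : (i : ℕ) = n + 1 := by rw [e]; rfl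
      omega
    rw [Finset.sum_congr rfl hne, Finset.sum_add_distrib, ← Finset.mul_sum, ← Finset.mul_sum]
    obtain ⟨hxk1, hxk2⟩ := hx.2.1 k hk
    obtain ⟨hyk1, hyk2⟩ := hy.2.1 k hk
    constructor <;> nlinarith
  · intro i
    by_cases h : i = Fin.last (n+1)
    · subst h; simp only [if_pos rfl]; exact ⟨hcl, hcu⟩
    · simp only [if_neg h]
      obtain ⟨hx1, hx2⟩ := hx.2.2 i
      obtain ⟨hy1, hy2⟩ := hy.2.2 i
      constructor <;> nlinarith
lemma exchange (n : ℕ) (a l u L U : Fin (n+2) → ℝ) (ha : ∀ i, 0 < a i)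
    (B1 B2 : ℝ) (x y : Fin (n+2) → ℝ)
    (hx : qrapncOpt (n+2) a l u L U B1 x) (hy : qrapncOpt (n+2) a l u L U B2 y)
    (h1 : y (Fin.last (n+1)) < x (Fin.last (n+1)))
    (h2 : (∑ i : Fin (n+1), x i.castSucc) < (∑ i : Fin (n+1), y i.castSucc)) : False := by
  set lt := Fin.last (n+1) with hltdef
  set Sx := ∑ i : Fin (n+1), x i.castSucc with hSx
  set Sy := ∑ i : Fin (n+1), y i.castSucc with hSy
  have hax : 0 < a lt := ha lt
  have hg : 0 < x lt - y lt := by linarith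
  have hG : 0 < Sy - Sx := by linarith
  set θ := min 1 ((x lt - y lt) / (2 * (Sy - Sx))) with hθdef
  have hθpos : 0 < θ := lt_min one_pos (div_pos hg (by linarith))
  have hθ1 : θ ≤ 1 := min_le_left _ _
  set δ := θ * (Sy - Sx) with hδdef
  have hδpos : 0 < δ := mul_pos hθpos hG
  have hδg : δ < x lt - y lt := by
    have h := min_le_right 1 ((x lt - y lt) / (2 * (Sy - Sx)))
    have h2' : θ * (Sy - Sx) ≤ ((x lt - y lt) / (2 * (Sy - Sx))) * (Sy - Sx) :=
      mul_le_mul_of_nonneg_right h hG.le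
    have h3 : ((x lt - y lt) / (2 * (Sy - Sx))) * (Sy - Sx) = (x lt - y lt) / 2 := by
      field_simp
    linarith
  have hxl := hx.1.2.2 lt
  have hyl := hy.1.2.2 lt
  have hsumx : Sx + x lt = B1 := by
    rw [← hx.1.1, Fin.sum_univ_castSucc]
  have hsumy : Sy + y lt = B2 := by
    rw [← hy.1.1, Fin.sum_univ_castSucc]
  -- feasibility of the two perturbed points
  have hx'f := combo_feas n l u L U B1 B2 x y hx.1 hy.1 θ (x lt - δ) hθpos.le hθ1
    (by linarith [hyl.1]) (by linarith [hxl.2])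
  have hy'f := combo_feas n l u L U B1 B2 x y hx.1 hy.1 (1-θ) (y lt + δ) (by linarith)
    (by linarith) (by linarith [hyl.1]) (by linarith [hxl.2])
  rw [show (1-θ) * Sx + θ * Sy + (x lt - δ) = B1 by rw [hδdef]; linarith [hsumx]] at hx'f
  rw [show (1-(1-θ)) * Sx + (1-θ) * Sy + (y lt + δ) = B2 by rw [hδdef]; linarith [hsumy]] at hy'f
  have hle1 := hx.2 _ hx'f
  have hle2 := hy.2 _ hy'f
  -- objective computation
  have pt : ∀ i : Fin (n+2),
      (1/2)*((if i = lt then x lt - δ else (1-θ)*x i + θ*y i))^2 / a i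
        + (1/2)*((if i = lt then y lt + δ else (1-(1-θ))*x i + (1-θ)*y i))^2 / a i
      = ((1/2)*(x i)^2/a i + (1/2)*(y i)^2/a i)
        + (if i = lt then (δ^2 - δ*(x lt - y lt)) / a i
            else (θ^2 - θ) * ((x i - y i)^2 / a i)) := by
    intro i
    have hai := (ha i).ne'
    by_cases h : i = lt
    · subst h; simp only [if_pos rfl, ↓reduceIte]; field_simp; ring
    · simp only [if_neg h]; field_simp; ring
  have hobj : qrapObj (n+2) a (fun i => if i = lt then x lt - δ else (1-θ)*x i + θ*y i)
      + qrapObj (n+2) a (fun i => if i = lt then y lt + δ else (1-(1-θ))*x i + (1-θ)*y i)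
      = (qrapObj (n+2) a x + qrapObj (n+2) a y)
        + ∑ i : Fin (n+2), (if i = lt then (δ^2 - δ*(x lt - y lt)) / a i
            else (θ^2 - θ) * ((x i - y i)^2 / a i)) := by
    simp only [qrapObj, ← Finset.sum_add_distrib]
    exact Finset.sum_congr rfl fun i _ => pt i
  have hTle : ∑ i : Fin (n+2), (if i = lt then (δ^2 - δ*(x lt - y lt)) / a i
      else (θ^2 - θ) * ((x i - y i)^2 / a i))
      ≤ ∑ i : Fin (n+2), (if i = lt then (δ^2 - δ*(x lt - y lt)) / a i else 0) := by
    refine Finset.sum_le_sum fun i _ => ?_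
    by_cases h : i = lt
    · simp [h]
    · simp only [if_neg h]
      have h1' : θ^2 - θ ≤ 0 := by nlinarith
      have h2' : 0 ≤ (x i - y i)^2 / a i := div_nonneg (sq_nonneg _) (ha i).le
      exact mul_nonpos_of_nonpos_of_nonneg h1' h2'
  have hTeq : ∑ i : Fin (n+2), (if i = lt then (δ^2 - δ*(x lt - y lt)) / a i else 0)
      = (δ^2 - δ*(x lt - y lt)) / a lt := by
    rw [Finset.sum_ite_eq' Finset.univ lt (fun i => (δ^2 - δ*(x lt - y lt)) / a i)]
    simp
  have hTneg : (δ^2 - δ*(x lt - y lt)) / a lt < 0 :=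
    div_neg_of_neg_of_pos (by nlinarith) hax
  linarith
lemma restrict_opt (n : ℕ) (a l u L U : Fin (n+2) → ℝ) (B : ℝ) (x : Fin (n+2) → ℝ)
    (hx : qrapncOpt (n+2) a l u L U B x) :
    qrapncOpt (n+1) (a ∘ Fin.castSucc) (l ∘ Fin.castSucc) (u ∘ Fin.castSucc)
      (L ∘ Fin.castSucc) (U ∘ Fin.castSucc)
      (∑ i : Fin (n+1), x i.castSucc) (x ∘ Fin.castSucc) := by
  constructor
  · refine ⟨rfl, ?_, ?_⟩
    · intro k hk
      have hk2 : ((k.castSucc : Fin (n+2)) : ℕ) + 1 < n + 2 := by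
        simpa using by omega
      have := hx.1.2.1 k.castSucc hk2
      rwa [sum_Iic_castSucc] at this
    · intro i
      exact hx.1.2.2 i.castSucc
  · intro z hz
    set w : Fin (n+2) → ℝ := Fin.snoc z (x (Fin.last (n+1))) with hw
    have hwc : ∀ i : Fin (n+1), w i.castSucc = z i := fun i => Fin.snoc_castSucc _ _ i
    have hwl : w (Fin.last (n+1)) = x (Fin.last (n+1)) := Fin.snoc_last _ _
    have hwfeas : qrapncFeas (n+2) l u L U B w := by
      refine ⟨?_, ?_, ?_⟩
      · have hsw : ∑ i : Fin (n+1), w i.castSucc = ∑ i : Fin (n+1), z i :=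
          Finset.sum_congr rfl fun i _ => hwc i
        have hxsum : ∑ i : Fin (n+1), z i + x (Fin.last (n+1)) = B := by
          rw [hz.1, ← hx.1.1]; exact (Fin.sum_univ_castSucc x).symm
        rw [Fin.sum_univ_castSucc, hsw, hwl]; exact hxsum
      · intro k hk
        have hkn : (k : ℕ) < n + 1 := by omega
        set k' : Fin (n+1) := ⟨(k : ℕ), hkn⟩ with hk'
        have hkk : k = k'.castSucc := by
          apply Fin.ext; simp [hk']
        rw [hkk, sum_Iic_castSucc]
        have hsz : ∑ i ∈ Finset.Iic k', w i.castSucc = ∑ i ∈ Finset.Iic k', z i :=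
          Finset.sum_congr rfl fun i _ => hwc i
        rw [hsz]
        by_cases hcase : (k' : ℕ) + 1 < n + 1
        · have := hz.2.1 k' hcase
          exact this
        · have hkn' : (k' : ℕ) = n := by omega
          have hk'last : k' = Fin.last n := Fin.ext (by simpa using hkn')
          rw [hk'last, Iic_last_eq]
          have hxk := hx.1.2.1 k hk
          rw [hkk, hk'last] at hxk
          rw [sum_Iic_castSucc, Iic_last_eq] at hxk
          have : ∑ i : Fin (n+1), z i = ∑ i : Fin (n+1), x i.castSucc := hz.1
          rw [this]
          exact hxk
      · intro i
        induction i using Fin.lastCases with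
        | last => rw [hwl]; exact hx.1.2.2 _
        | cast i => rw [hwc i]; exact hz.2.2 i
    have hle := hx.2 w hwfeas
    rw [qrapObj_split (n+1) a x, qrapObj_split (n+1) a w] at hle
    have hwcomp : w ∘ Fin.castSucc = z := funext hwc
    rw [hwcomp, hwl] at hle
    linarith
lemma mono (n : ℕ) : ∀ (a l u L U : Fin (n+1) → ℝ), (∀ i, 0 < a i) →
    ∀ (B1 B2 : ℝ) (x y : Fin (n+1) → ℝ), B1 ≤ B2 →
    qrapncOpt (n+1) a l u L U B1 x → qrapncOpt (n+1) a l u L U B2 y →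
    ∀ i, x i ≤ y i := by
  induction n with
  | zero =>
    intro a l u L U ha B1 B2 x y hB hx hy i
    have hx1 : x 0 = B1 := by simpa using hx.1.1
    have hy1 : y 0 = B2 := by simpa using hy.1.1
    have hi0 : i = 0 := Fin.ext (by omega)
    rw [hi0, hx1, hy1]; exact hB
  | succ n ih =>
    intro a l u L U ha B1 B2 x y hB hx hy
    have hsumx : ∑ i : Fin (n+1), x i.castSucc + x (Fin.last (n+1)) = B1 := by
      rw [← hx.1.1]; exact (Fin.sum_univ_castSucc x).symm
    have hsumy : ∑ i : Fin (n+1), y i.castSucc + y (Fin.last (n+1)) = B2 := by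
      rw [← hy.1.1]; exact (Fin.sum_univ_castSucc y).symm
    have hxl : x (Fin.last (n+1)) ≤ y (Fin.last (n+1)) := by
      by_contra h
      push_neg at h
      exact exchange n a l u L U ha B1 B2 x y hx hy h (by linarith)
    have hS : ∑ i : Fin (n+1), x i.castSucc ≤ ∑ i : Fin (n+1), y i.castSucc := by
      by_contra h
      push_neg at h
      exact exchange n a l u L U ha B2 B1 y x hy hx (by linarith) h
    have hrx := restrict_opt n a l u L U B1 x hx
    have hry := restrict_opt n a l u L U B2 y hy
    have hmain := ih (a ∘ Fin.castSucc) (l ∘ Fin.castSucc) (u ∘ Fin.castSucc)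
      (L ∘ Fin.castSucc) (U ∘ Fin.castSucc) (fun i => ha i.castSucc) _ _ _ _ hS hrx hry
    intro i
    induction i using Fin.lastCases with
    | last => exact hxl
    | cast i => exact hmain i
lemma exists_opt (n : ℕ) (a l u L U : Fin n → ℝ) (ha : ∀ i, 0 < a i) (C : ℝ)
    (hne : ∃ x, qrapncFeas n l u L U C x) : ∃ x, qrapncOpt n a l u L U C x := by
  obtain ⟨x0, hx0⟩ := hne
  set F : Set (Fin n → ℝ) := {x | qrapncFeas n l u L U C x} with hF
  have hcont_sum : ∀ s : Finset (Fin n), Continuous (fun x : Fin n → ℝ => ∑ i ∈ s, x i) :=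
    fun s => continuous_finset_sum s fun i _ => continuous_apply i
  have hFc : IsClosed F := by
    have h1 : IsClosed {x : Fin n → ℝ | ∑ i, x i = C} :=
      isClosed_eq (hcont_sum Finset.univ) continuous_const
    have h2 : ∀ k : Fin n, IsClosed {x : Fin n → ℝ | (k : ℕ) + 1 < n →
        (L k ≤ ∑ i ∈ Finset.Iic k, x i ∧ ∑ i ∈ Finset.Iic k, x i ≤ U k)} := by
      intro k
      by_cases hk : (k : ℕ) + 1 < n
      · simp only [hk, forall_const]
        exact ((isClosed_le continuous_const (hcont_sum _)).inter
          (isClosed_le (hcont_sum _) continuous_const))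
      · simp only [hk, false_implies]
        exact isClosed_univ.mono (by simp)
    have h3 : ∀ i : Fin n, IsClosed {x : Fin n → ℝ | l i ≤ x i ∧ x i ≤ u i} := by
      intro i
      exact ((isClosed_le continuous_const (continuous_apply i)).inter
        (isClosed_le (continuous_apply i) continuous_const))
    have hFeq : F = {x : Fin n → ℝ | ∑ i, x i = C}
        ∩ ((⋂ k : Fin n, {x : Fin n → ℝ | (k : ℕ) + 1 < n →
            (L k ≤ ∑ i ∈ Finset.Iic k, x i ∧ ∑ i ∈ Finset.Iic k, x i ≤ U k)})
          ∩ ⋂ i : Fin n, {x : Fin n → ℝ | l i ≤ x i ∧ x i ≤ u i}) := by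
      ext z
      simp only [hF, Set.mem_setOf_eq, Set.mem_inter_iff, Set.mem_iInter, qrapncFeas]
    rw [hFeq]
    exact h1.inter ((isClosed_iInter h2).inter (isClosed_iInter h3))
  have hsub : F ⊆ Set.pi Set.univ (fun i => Set.Icc (l i) (u i)) := by
    intro z hz i _
    exact hz.2.2 i
  have hK : IsCompact (Set.pi Set.univ (fun i : Fin n => Set.Icc (l i) (u i))) :=
    isCompact_univ_pi fun i => isCompact_Icc
  have hFK : IsCompact F := hK.of_isClosed_subset hFc hsub
  have hcont : Continuous (qrapObj n a) := by
    unfold qrapObj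
    exact continuous_finset_sum _ fun i _ =>
      (continuous_const.mul ((continuous_apply i : Continuous fun x : Fin n → ℝ => x i).pow 2)).div_const (a i)
  obtain ⟨z, hzF, hzmin⟩ := hFK.exists_isMinOn ⟨x0, hx0⟩ hcont.continuousOn
  exact ⟨z, hzF, fun y hy => hzmin hy⟩

theorem stmt_7 (m : ℕ) (hm : 1 ≤ m) (a l u L U : Fin (m+1) → ℝ) (C : ℝ)
    (ha : ∀ i, 0 < a i) (hlu : ∀ i, l i ≤ u i)
    (hC1 : L (Fin.last m) ≤ C) (hC2 : C ≤ U (Fin.last m))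
    (hfeas : ∃ x, qrapncFeas (m+1) l u L U C x)
    (xL xU : Fin m → ℝ)
    (hxL : qrapncOpt m (a ∘ Fin.castSucc) (l ∘ Fin.castSucc) (u ∘ Fin.castSucc)
      (L ∘ Fin.castSucc) (U ∘ Fin.castSucc) (L ⟨m - 1, by omega⟩) xL)
    (hxU : qrapncOpt m (a ∘ Fin.castSucc) (l ∘ Fin.castSucc) (u ∘ Fin.castSucc)
      (L ∘ Fin.castSucc) (U ∘ Fin.castSucc) (U ⟨m - 1, by omega⟩) xU) :
    ∀ x : Fin (m+1) → ℝ,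
      qrapncOpt (m+1) a l u L U C x ↔
      ((∑ i, x i = C ∧
          (∀ i : Fin m, xL i ≤ x i.castSucc ∧ x i.castSucc ≤ xU i) ∧
          l (Fin.last m) ≤ x (Fin.last m) ∧ x (Fin.last m) ≤ u (Fin.last m)) ∧
        ∀ y : Fin (m+1) → ℝ,
          (∑ i, y i = C ∧
            (∀ i : Fin m, xL i ≤ y i.castSucc ∧ y i.castSucc ≤ xU i) ∧
            l (Fin.last m) ≤ y (Fin.last m) ∧ y (Fin.last m) ≤ u (Fin.last m)) →
          qrapObj (m+1) a x ≤ qrapObj (m+1) a y) := by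
  obtain ⟨n, rfl⟩ : ∃ n, m = n + 1 := ⟨m - 1, by omega⟩
  have hmk : (⟨n + 1 - 1, by omega⟩ : Fin (n+2)) = (Fin.last n).castSucc := by
    apply Fin.ext; simp
  rw [hmk] at hxL hxU
  have hbig : ∀ (k : Fin (n+2)), (k : ℕ) + 1 < n + 2 → ∀ z : Fin (n+2) → ℝ,
      (∀ i : Fin (n+1), xL i ≤ z i.castSucc ∧ z i.castSucc ≤ xU i) →
      L k ≤ ∑ i ∈ Finset.Iic k, z i ∧ ∑ i ∈ Finset.Iic k, z i ≤ U k := by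
    intro k hk z hz
    have hkn : (k : ℕ) < n + 1 := by omega
    have hkk : k = (⟨(k : ℕ), hkn⟩ : Fin (n+1)).castSucc := by apply Fin.ext; simp
    set k' : Fin (n+1) := ⟨(k : ℕ), hkn⟩ with hk'
    rw [hkk, sum_Iic_castSucc]
    have hL : L (k'.castSucc) ≤ ∑ i ∈ Finset.Iic k', xL i ∧
        ∑ i ∈ Finset.Iic k', xU i ≤ U (k'.castSucc) := by
      by_cases hcase : (k' : ℕ) + 1 < n + 1
      · exact ⟨(hxL.1.2.1 k' hcase).1, (hxU.1.2.1 k' hcase).2⟩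
      · have hv : (k' : ℕ) = n := by omega
        have hl : k' = Fin.last n := Fin.ext (by simpa using hv)
        rw [hl, Iic_last_eq]
        exact ⟨le_of_eq hxL.1.1.symm, le_of_eq hxU.1.1⟩
    constructor
    · calc L (k'.castSucc) ≤ ∑ i ∈ Finset.Iic k', xL i := hL.1
        _ ≤ ∑ i ∈ Finset.Iic k', z i.castSucc :=
          Finset.sum_le_sum fun i _ => (hz i).1
    · calc ∑ i ∈ Finset.Iic k', z i.castSucc ≤ ∑ i ∈ Finset.Iic k', xU i :=
          Finset.sum_le_sum fun i _ => (hz i).2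
        _ ≤ U (k'.castSucc) := hL.2
  have feas_of_R : ∀ z : Fin (n+2) → ℝ,
      (∑ i, z i = C ∧
        (∀ i : Fin (n+1), xL i ≤ z i.castSucc ∧ z i.castSucc ≤ xU i) ∧
        l (Fin.last (n+1)) ≤ z (Fin.last (n+1)) ∧ z (Fin.last (n+1)) ≤ u (Fin.last (n+1))) →
      qrapncFeas (n+2) l u L U C z := by
    rintro z ⟨hz1, hz2, hz3, hz4⟩
    refine ⟨hz1, fun k hk => hbig k hk z hz2, ?_⟩
    intro i
    induction i using Fin.lastCases with
    | last => exact ⟨hz3, hz4⟩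
    | cast i => exact ⟨le_trans (hxL.1.2.2 i).1 (hz2 i).1,
        le_trans (hz2 i).2 (hxU.1.2.2 i).2⟩
  have bounds_of_opt : ∀ z : Fin (n+2) → ℝ, qrapncOpt (n+2) a l u L U C z →
      ∀ i : Fin (n+1), xL i ≤ z i.castSucc ∧ z i.castSucc ≤ xU i := by
    intro z hz
    have hres := restrict_opt n a l u L U C z hz
    have hk0c := hz.1.2.1 ((Fin.last n).castSucc)
      (by rw [Fin.coe_castSucc, Fin.val_last]; omega)
    rw [sum_Iic_top] at hk0c
    have h1 := mono n (a ∘ Fin.castSucc) (l ∘ Fin.castSucc) (u ∘ Fin.castSucc)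
      (L ∘ Fin.castSucc) (U ∘ Fin.castSucc) (fun i => ha i.castSucc)
      (L ((Fin.last n).castSucc)) (∑ i : Fin (n+1), z i.castSucc) xL (z ∘ Fin.castSucc)
      hk0c.1 hxL hres
    have h2 := mono n (a ∘ Fin.castSucc) (l ∘ Fin.castSucc) (u ∘ Fin.castSucc)
      (L ∘ Fin.castSucc) (U ∘ Fin.castSucc) (fun i => ha i.castSucc)
      (∑ i : Fin (n+1), z i.castSucc) (U ((Fin.last n).castSucc)) (z ∘ Fin.castSucc) xU
      hk0c.2 hres hxU
    exact fun i => ⟨h1 i, h2 i⟩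
  obtain ⟨xs, hxs⟩ := exists_opt (n+2) a l u L U ha C hfeas
  intro x
  constructor
  · intro hx
    refine ⟨⟨hx.1.1, bounds_of_opt x hx, (hx.1.2.2 (Fin.last (n+1))).1,
      (hx.1.2.2 (Fin.last (n+1))).2⟩, ?_⟩
    exact fun y hy => hx.2 y (feas_of_R y hy)
  · rintro ⟨hxf, hopt⟩
    refine ⟨feas_of_R x hxf, ?_⟩
    intro y hy
    have hxsR : ∑ i, xs i = C ∧
        (∀ i : Fin (n+1), xL i ≤ xs i.castSucc ∧ xs i.castSucc ≤ xU i) ∧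
        l (Fin.last (n+1)) ≤ xs (Fin.last (n+1)) ∧ xs (Fin.last (n+1)) ≤ u (Fin.last (n+1)) :=
      ⟨hxs.1.1, bounds_of_opt xs hxs, (hxs.1.2.2 (Fin.last (n+1))).1,
        (hxs.1.2.2 (Fin.last (n+1))).2⟩
    exact le_trans (hopt xs hxsR) (hxs.2 y hy)
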